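/- The shift semigroup S_t : H_w → H_w, (S_t f)(x) = f(x+t), satisfies the operator norm bound ‖S_t‖_op ≤ e^{t/2} for all t ≥ 0; in particular it is quasi-contractive. -/

import Mathlib

open MeasureTheory Set Filter Real

/-- the shift semigroup `(S_t f)(x) = f(x+t)` on `H_w` satisfies
`‖S_t f‖²_w ≤ e^t ‖f‖²_w`, i.e. `‖S_t‖_op ≤ e^{t/2}`; in particular it is quasi-contractive.
Here `S_t f` has value `f t` at `0` and derivative `x ↦ f'(x+t)`. -/
theorem stmt_4 {U : Type*} [NormedAddCommGroup U] [InnerProductSpace ℝ U]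
    [CompleteSpace U] [SecondCountableTopology U]
    (w : ℝ → ℝ) (hw_cont : Continuous w) (hw_mono : MonotoneOn w (Ici 0))
    (hw0 : w 0 = 1)
    (hw_inv : IntegrableOn (fun s => (w s)⁻¹) (Ioi 0))
    (t : ℝ) (ht : 0 ≤ t)
    (f f' : ℝ → U)
    (hf_loc : ∀ y ∈ Ici (0:ℝ), IntervalIntegrable f' volume 0 y)
    (hf_ac : ∀ y ∈ Ici (0:ℝ), f y = f 0 + ∫ s in (0:ℝ)..y, f' s)
    (hf_w : IntegrableOn (fun y => w y * ‖f' y‖ ^ 2) (Ioi 0)) :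
    ‖f t‖ ^ 2 + ∫ x in Ioi (0:ℝ), w x * ‖f' (x + t)‖ ^ 2
      ≤ Real.exp t * (‖f 0‖ ^ 2 + ∫ x in Ioi (0:ℝ), w x * ‖f' x‖ ^ 2) := by
  set g : ℝ → ℝ := fun y => w y * ‖f' y‖ ^ 2 with hg_def
  have hw_one : ∀ y ∈ Ici (0:ℝ), 1 ≤ w y := fun y hy => hw0 ▸ hw_mono self_mem_Ici hy hy
  -- integrability of f' on Ioc 0 t
  have hf'Ioc : IntegrableOn f' (Ioc 0 t) volume := by
    have := hf_loc t (mem_Ici.mpr ht)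
    rwa [intervalIntegrable_iff_integrableOn_Ioc_of_le ht] at this
  have hsm_norm : AEStronglyMeasurable (fun y => ‖f' y‖) (volume.restrict (Ioc 0 t)) :=
    hf'Ioc.1.norm
  have hsm_sq : AEStronglyMeasurable (fun y => ‖f' y‖ ^ 2) (volume.restrict (Ioc 0 t)) := by
    simpa [pow_two, Pi.mul_def] using hsm_norm.mul hsm_norm
  have hgIoc : IntegrableOn g (Ioc 0 t) volume := hf_w.mono_set Ioc_subset_Ioi_self
  -- ‖f'‖² integrable on Ioc 0 t
  have hsqIoc : IntegrableOn (fun y => ‖f' y‖ ^ 2) (Ioc 0 t) volume := by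
    refine Integrable.mono' hgIoc hsm_sq ?_
    filter_upwards [ae_restrict_mem measurableSet_Ioc] with y hy
    have h1 : 1 ≤ w y := hw_one y (le_of_lt hy.1)
    rw [Real.norm_of_nonneg (sq_nonneg _)]
    show ‖f' y‖ ^ 2 ≤ w y * ‖f' y‖ ^ 2
    nlinarith [sq_nonneg ‖f' y‖]
  set A2 : ℝ := ∫ y in Ioc 0 t, ‖f' y‖ ^ 2 with hA2_def
  set A : ℝ := ∫ y in Ioc 0 t, g y with hA_def
  have hA2_nonneg : 0 ≤ A2 :=
    setIntegral_nonneg measurableSet_Ioc fun y _ => sq_nonneg _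
  have hA2A : A2 ≤ A := by
    refine setIntegral_mono_on hsqIoc hgIoc measurableSet_Ioc fun y hy => ?_
    have h1 : 1 ≤ w y := hw_one y (le_of_lt hy.1)
    show ‖f' y‖ ^ 2 ≤ w y * ‖f' y‖ ^ 2
    nlinarith [sq_nonneg ‖f' y‖]
  have hA_nonneg : 0 ≤ A := le_trans hA2_nonneg hA2A
  -- Cauchy–Schwarz: ∫ ‖f'‖ ≤ √t √A₂
  set I : ℝ := ∫ y in Ioc 0 t, ‖f' y‖ with hI_def
  have hfin : IsFiniteMeasure (volume.restrict (Ioc (0:ℝ) t)) := by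
    constructor
    rw [Measure.restrict_apply_univ]
    exact measure_Ioc_lt_top
  have hCS : I ≤ Real.sqrt t * Real.sqrt A2 := by
    have hpq : Real.HolderConjugate 2 2 := by rw [Real.holderConjugate_iff]; norm_num
    have h1 : MemLp (fun _ : ℝ => (1:ℝ)) (ENNReal.ofReal 2) (volume.restrict (Ioc 0 t)) :=
      memLp_const 1
    have h2 : MemLp (fun y => ‖f' y‖) (ENNReal.ofReal 2) (volume.restrict (Ioc 0 t)) := by
      have h22 : ENNReal.ofReal 2 = 2 := by norm_num
      rw [h22, memLp_two_iff_integrable_sq hsm_norm]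
      exact hsqIoc
    have key := MeasureTheory.integral_mul_le_Lp_mul_Lq_of_nonneg hpq
      (f := fun _ : ℝ => (1:ℝ)) (g := fun y => ‖f' y‖)
      (Eventually.of_forall fun _ => zero_le_one)
      (Eventually.of_forall fun y => norm_nonneg _) h1 h2
    simp only [one_mul] at key
    have e1 : ∫ _ in Ioc (0:ℝ) t, (1:ℝ) ^ (2:ℝ) = t := by
      simp [Measure.restrict_apply_univ, Real.volume_Ioc, ENNReal.toReal_ofReal ht, ht]
    have e2 : (∫ y in Ioc (0:ℝ) t, ‖f' y‖ ^ (2:ℝ)) = A2 := by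
      rw [hA2_def]
      congr 1
      funext y
      rw [show (2:ℝ) = ((2:ℕ):ℝ) by norm_num, Real.rpow_natCast]
    rw [e1, e2] at key
    calc I ≤ t ^ (1/(2:ℝ)) * A2 ^ (1/(2:ℝ)) := key
      _ = Real.sqrt t * Real.sqrt A2 := by
          rw [Real.sqrt_eq_rpow, Real.sqrt_eq_rpow]
  have hCS' : I ≤ Real.sqrt t * Real.sqrt A :=
    le_trans hCS (mul_le_mul_of_nonneg_left (Real.sqrt_le_sqrt hA2A) (Real.sqrt_nonneg t))
  have hI_nonneg : 0 ≤ I := setIntegral_nonneg measurableSet_Ioc fun y _ => norm_nonneg _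
  -- ‖f t‖ ≤ ‖f 0‖ + I
  have hft : ‖f t‖ ≤ ‖f 0‖ + I := by
    rw [hf_ac t (mem_Ici.mpr ht)]
    refine le_trans (norm_add_le _ _) (add_le_add_right ?_ _)
    have := intervalIntegral.norm_integral_le_integral_norm_uIoc (f := f') (a := 0) (b := t)
      (μ := volume)
    rwa [uIoc_of_le ht] at this
  -- the tail integral
  set C : ℝ := ∫ y in Ioi t, g y with hC_def
  have hgIoiT : IntegrableOn g (Ioi t) volume := hf_w.mono_set (Ioi_subset_Ioi ht)
  have hC_nonneg : 0 ≤ C := setIntegral_nonneg measurableSet_Ioi fun y hy =>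
    mul_nonneg (le_trans zero_le_one (hw_one y (le_of_lt (lt_of_le_of_lt ht hy))))
      (sq_nonneg _)
  -- splitting B = A + C
  have hsplit : (∫ y in Ioi (0:ℝ), g y) = A + C := by
    rw [hA_def, hC_def, ← setIntegral_union (Ioc_disjoint_Ioi le_rfl) measurableSet_Ioi
      hgIoc hgIoiT, Ioc_union_Ioi_eq_Ioi ht]
  -- AESM of ‖f'‖² on Ioi t
  have hsm_sq_Ioi : AEStronglyMeasurable (fun y => ‖f' y‖ ^ 2) (volume.restrict (Ioi t)) := by
    have hwinv : AEStronglyMeasurable (fun y => (w y)⁻¹) (volume.restrict (Ioi t)) :=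
      (hw_cont.measurable.inv).aestronglyMeasurable
    have hsm_g : AEStronglyMeasurable g (volume.restrict (Ioi t)) :=
      hf_w.1.mono_measure (Measure.restrict_mono (Ioi_subset_Ioi ht) le_rfl)
    refine (hwinv.mul hsm_g).congr ?_
    filter_upwards [ae_restrict_mem measurableSet_Ioi] with y hy
    have h1 : 1 ≤ w y := hw_one y (le_of_lt (lt_of_le_of_lt ht hy))
    have hne : w y ≠ 0 := by linarith
    simp only [Pi.mul_apply]
    field_simp [hg_def]
    rfl
  -- change of variables for shifted integral
  have hshift : (∫ x in Ioi (0:ℝ), w x * ‖f' (x + t)‖ ^ 2)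
      = ∫ y in Ioi t, w (y - t) * ‖f' y‖ ^ 2 := by
    have h1 : Measure.map (fun x : ℝ => x + t) volume = volume :=
      map_add_right_eq_self volume t
    rw [show (∫ y in Ioi t, w (y - t) * ‖f' y‖ ^ 2)
        = ∫ y in Ioi t, w (y - t) * ‖f' y‖ ^ 2 ∂(Measure.map (fun x : ℝ => x + t) volume) by
          rw [h1],
      (measurableEmbedding_addRight t).setIntegral_map]
    have hpre : (fun x : ℝ => x + t) ⁻¹' Ioi t = Ioi 0 := by
      ext x; simp [lt_add_iff_pos_left]
    rw [hpre]
    congr 1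
    funext x
    simp
  have hshift_le : (∫ x in Ioi (0:ℝ), w x * ‖f' (x + t)‖ ^ 2) ≤ C := by
    rw [hshift, hC_def]
    refine setIntegral_mono_on ?_ hgIoiT measurableSet_Ioi fun y hy => ?_
    · refine Integrable.mono' hgIoiT
        ((hw_cont.comp (continuous_sub_right t)).aestronglyMeasurable.mul hsm_sq_Ioi) ?_
      filter_upwards [ae_restrict_mem measurableSet_Ioi] with y hy
      have hy0 : (0:ℝ) ≤ y - t := by simp at hy; linarith
      have hmono := hw_mono (mem_Ici.mpr hy0) (mem_Ici.mpr (le_trans ht (le_of_lt hy)))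
        (by linarith)
      have h1 : 1 ≤ w (y - t) := hw_one _ (mem_Ici.mpr hy0)
      rw [Real.norm_of_nonneg (mul_nonneg (by linarith) (sq_nonneg _))]
      exact mul_le_mul_of_nonneg_right hmono (sq_nonneg _)
    · have hy0 : (0:ℝ) ≤ y - t := by simp at hy; linarith
      have hmono := hw_mono (mem_Ici.mpr hy0) (mem_Ici.mpr (le_trans ht (le_of_lt hy)))
        (by linarith)
      exact mul_le_mul_of_nonneg_right hmono (sq_nonneg _)
  -- final arithmetic
  rw [hsplit]
  set a := ‖f 0‖
  set u := Real.sqrt t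
  set v := Real.sqrt A
  have hu2 : u ^ 2 = t := Real.sq_sqrt ht
  have hv2 : v ^ 2 = A := Real.sq_sqrt hA_nonneg
  have ha : 0 ≤ a := norm_nonneg _
  have hexp : 1 + t ≤ Real.exp t := by linarith [Real.add_one_le_exp t]
  have hft2 : ‖f t‖ ^ 2 ≤ (a + u * v) ^ 2 := by
    have h1 : ‖f t‖ ≤ a + u * v := le_trans hft (by linarith)
    exact pow_le_pow_left₀ (norm_nonneg _) h1 2
  have hexp_pos : (0:ℝ) < Real.exp t := Real.exp_pos t
  nlinarith [hshift_le, sq_nonneg (u * a - v), sq_nonneg u, sq_nonneg v,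
    mul_nonneg hC_nonneg (sq_nonneg u), mul_nonneg ha (mul_nonneg (Real.sqrt_nonneg t) (Real.sqrt_nonneg A))]
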